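/- Poissonized hitting time tail upper bound (critical case): Let (X_n)_{n≥1} be an i.i.d. sequence with ℙ(X_n = 1) = ℙ(X_n = −1) = 1/2, let V_0 = 1, V_n = 1 + Σ_{k=1}^{n} X_k, and let γ = inf{n ≥ 0 : V_n = 0}. Let ν ≥ 3 be a real number and let Y be a Poisson(ν)-distributed random variable independent of the sequence (X_n). Then ℙ(γ ≥ Y) ≤ 2.5/ν^{3/2} + (2/√π) · (1/√ν + 3/ν^{3/2}). -/

import Mathlib

open MeasureTheory ProbabilityTheory
open scoped ENNReal

namespace PHT
open Real Nat
open scoped ENNReal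


/-- path-count bound function: `dd n k` bounds the number of nonneg walks of length `n`
from 1 ending at `k`, divided pattern. -/
def dd (n k : ℕ) : ℕ :=
  if (n + k) % 2 = 1 then Nat.choose n ((n + k - 1) / 2) - Nat.choose n ((n + k - 1) / 2 + 1)
  else 0

lemma chooseDecr {n u : ℕ} (h : n ≤ 2 * u + 1) : Nat.choose n (u + 1) ≤ Nat.choose n u := by
  rcases le_or_gt (u + 1) n with hn | hn
  · have key := Nat.choose_succ_right_eq n u
    have h1 : Nat.choose n (u + 1) * (u + 1) ≤ Nat.choose n u * (u + 1) := by
      rw [key]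
      exact Nat.mul_le_mul_left _ (by omega)
    exact Nat.le_of_mul_le_mul_right h1 (by omega)
  · rw [Nat.choose_eq_zero_of_lt hn]; exact Nat.zero_le _

lemma dd_rec (n k : ℕ) : dd n k + dd n (k + 2) ≤ dd (n + 1) (k + 1) := by
  rcases Nat.even_or_odd (n + k) with he | ho
  · have he' : (n + k) % 2 = 0 := Nat.even_iff.mp he
    have h1 : dd n k = 0 := by unfold dd; rw [if_neg (by omega)]
    have h2 : dd n (k + 2) = 0 := by unfold dd; rw [if_neg (by omega)]
    simp [h1, h2]
  · have hpar : (n + k) % 2 = 1 := Nat.odd_iff.mp ho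
    set u := (n + k - 1) / 2 with hu
    have hu2 : n + k - 1 = 2 * u := by omega
    have e1 : dd n k = Nat.choose n u - Nat.choose n (u + 1) := by
      unfold dd; rw [if_pos hpar]
    have e2 : dd n (k + 2) = Nat.choose n (u + 1) - Nat.choose n (u + 2) := by
      unfold dd
      rw [if_pos (by omega)]
      congr 2 <;> omega
    have e3 : dd (n + 1) (k + 1) = Nat.choose (n + 1) (u + 1) - Nat.choose (n + 1) (u + 2) := by
      unfold dd
      rw [if_pos (by omega)]
      congr 2 <;> omega
    have p1 : Nat.choose (n + 1) (u + 1) = Nat.choose n u + Nat.choose n (u + 1) :=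
      Nat.choose_succ_succ n u
    have p2 : Nat.choose (n + 1) (u + 2) = Nat.choose n (u + 1) + Nat.choose n (u + 2) :=
      Nat.choose_succ_succ n (u + 1)
    have d1 : Nat.choose n (u + 1) ≤ Nat.choose n u := chooseDecr (by omega)
    have d2 : Nat.choose n (u + 2) ≤ Nat.choose n (u + 1) := chooseDecr (by omega)
    omega

lemma dd_sum (n K : ℕ) : (∑ k ∈ Finset.Icc 1 K, dd n k) ≤ Nat.choose n ((n + 1) / 2) := by
  suffices h : (∑ k ∈ Finset.Icc 1 K, dd n k) + Nat.choose n ((n + K + 1) / 2)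
      ≤ Nat.choose n ((n + 1) / 2) by omega
  induction K with
  | zero => simp
  | succ K ih =>
    rw [Finset.sum_Icc_succ_top (by omega : 1 ≤ K + 1)]
    rcases Nat.even_or_odd (n + K) with he | ho
    · -- dd n (K+1) is the choose difference, tail steps from u to u+1
      have hpar : (n + K) % 2 = 0 := Nat.even_iff.mp he
      set u := (n + K) / 2 with hu
      have e1 : dd n (K + 1) = Nat.choose n u - Nat.choose n (u + 1) := by
        unfold dd
        rw [if_pos (by omega)]
        congr 2 <;> omega
      have et : (n + K + 1) / 2 = u := by omega
      have et2 : (n + (K + 1) + 1) / 2 = u + 1 := by omega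
      have d1 : Nat.choose n (u + 1) ≤ Nat.choose n u := chooseDecr (by omega)
      rw [et] at ih
      rw [et2, e1]
      omega
    · have hpar : (n + K) % 2 = 1 := Nat.odd_iff.mp ho
      have e1 : dd n (K + 1) = 0 := by unfold dd; rw [if_neg (by omega)]
      have et : (n + (K + 1) + 1) / 2 = (n + K + 1) / 2 := by omega
      rw [et, e1]
      omega

open Real Nat




lemma sqrtPi_le_stirlingSeq (n : ℕ) : Real.sqrt Real.pi ≤ Stirling.stirlingSeq (n + 1) := by
  refine le_of_tendsto Stirling.tendsto_stirlingSeq_sqrt_pi ?_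
  filter_upwards [Filter.eventually_ge_atTop (n + 1)] with m hm
  have h := Stirling.stirlingSeq'_antitone (show n ≤ m - 1 by omega)
  simpa [Function.comp, Nat.succ_eq_add_one, Nat.sub_add_cancel (show 1 ≤ m by omega)] using h

lemma factorial_eq_stirling (n : ℕ) (hn : 1 ≤ n) :
    (n ! : ℝ) = Stirling.stirlingSeq n * (Real.sqrt (2 * n) * ((n : ℝ) / Real.exp 1) ^ n) := by
  have hpos : (0 : ℝ) < Real.sqrt (2 * n) * ((n : ℝ) / Real.exp 1) ^ n := by
    have h1 : (0 : ℝ) < Real.sqrt (2 * n) := Real.sqrt_pos.mpr (by positivity)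
    have h2 : (0 : ℝ) < ((n : ℝ) / Real.exp 1) ^ n := by
      apply pow_pos
      have : (0:ℝ) < (n:ℝ) := by exact_mod_cast hn
      positivity
    positivity
  rw [Stirling.stirlingSeq]
  field_simp

lemma centralBinom_le_real {k : ℕ} (hk : 1 ≤ k) :
    (Nat.centralBinom k : ℝ) ≤ 4 ^ k / (Real.sqrt Real.pi * Real.sqrt k) := by
  have hkR : (0:ℝ) < (k:ℝ) := by exact_mod_cast hk
  have hsq : (0:ℝ) < Real.sqrt k := Real.sqrt_pos.mpr hkR
  have hsqpi : (0:ℝ) < Real.sqrt Real.pi := Real.sqrt_pos.mpr Real.pi_pos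
  set s1 := Stirling.stirlingSeq k with hs1
  set s2 := Stirling.stirlingSeq (2 * k) with hs2
  have hs1pos : 0 < s1 := by
    obtain ⟨m, rfl⟩ : ∃ m, k = m + 1 := ⟨k - 1, by omega⟩
    exact Stirling.stirlingSeq'_pos m
  have hpi1 : Real.sqrt Real.pi ≤ s1 := by
    obtain ⟨m, rfl⟩ : ∃ m, k = m + 1 := ⟨k - 1, by omega⟩
    exact sqrtPi_le_stirlingSeq m
  have hs21 : s2 ≤ s1 := by
    obtain ⟨m, rfl⟩ : ∃ m, k = m + 1 := ⟨k - 1, by omega⟩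
    have h := Stirling.stirlingSeq'_antitone (show m ≤ 2 * (m + 1) - 1 by omega)
    simpa [Function.comp, Nat.sub_add_cancel (show 1 ≤ 2 * (m+1) by omega)] using h
  have hfk : (k ! : ℝ) = s1 * (Real.sqrt (2 * k) * ((k : ℝ) / Real.exp 1) ^ k) :=
    factorial_eq_stirling k hk
  have hf2k : ((2 * k) ! : ℝ) = s2 * (Real.sqrt (4 * k) * ((2 * k : ℕ) / Real.exp 1) ^ (2 * k)) := by
    have := factorial_eq_stirling (2 * k) (by omega)
    convert this using 4
    push_cast; ring
  have hspec : (Nat.centralBinom k : ℝ) * (k ! * k !) = ((2 * k)! : ℝ) := by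
    have h2 : Nat.centralBinom k * k ! * (2 * k - k)! = (2 * k)! :=
      Nat.choose_mul_factorial_mul_factorial (show k ≤ 2 * k by omega)
    have h3 : 2 * k - k = k := by omega
    rw [h3] at h2
    have h4 : Nat.centralBinom k * (k ! * k !) = (2 * k)! := by rw [← h2]; ring
    exact_mod_cast congrArg (Nat.cast (R := ℝ)) h4
  -- now real algebra
  have hfkpos : (0:ℝ) < (k ! : ℝ) := by exact_mod_cast Nat.factorial_pos k
  set q := ((k:ℝ) / Real.exp 1) ^ k with hq
  have hqpos : (0:ℝ) < q := by
    have : (0:ℝ) < (k:ℝ) := hkR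
    positivity
  have h4k : Real.sqrt (4 * k) = 2 * Real.sqrt k := by
    rw [show (4 : ℝ) * k = (2*Real.sqrt k)*(2*Real.sqrt k) by
      rw [show (2*Real.sqrt k)*(2*Real.sqrt k) = 4 * (Real.sqrt k * Real.sqrt k) by ring,
        Real.mul_self_sqrt hkR.le]]
    exact Real.sqrt_mul_self (by positivity)
  have h2k : Real.sqrt (2 * k) * Real.sqrt (2 * k) = 2 * k := Real.mul_self_sqrt (by positivity)
  have hpow : ((2 * k : ℕ) : ℝ) / Real.exp 1 = 2 * ((k:ℝ) / Real.exp 1) := by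
    push_cast; ring
  have hpow2 : (((2 * k : ℕ) : ℝ) / Real.exp 1) ^ (2*k) = 4 ^ k * q^2 := by
    rw [hpow, mul_pow, hq, ← pow_mul, mul_comm k 2,
      show (2:ℝ)^(2*k) = 4^k by rw [pow_mul]; norm_num]
  have hs2' : s2 ≤ s1 * s1 / Real.sqrt Real.pi := by
    rw [le_div_iff₀ hsqpi]
    calc s2 * Real.sqrt Real.pi ≤ s1 * Real.sqrt Real.pi :=
          mul_le_mul_of_nonneg_right hs21 hsqpi.le
      _ ≤ s1 * s1 := mul_le_mul_of_nonneg_left hpi1 hs1pos.le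
  have hsc : 2 * Real.sqrt k / Real.sqrt Real.pi = (2*(k:ℝ)) / (Real.sqrt Real.pi * Real.sqrt k) := by
    rw [div_eq_div_iff hsqpi.ne' (by positivity)]
    have hss := Real.mul_self_sqrt hkR.le
    nlinarith [hss]
  have hkey : ((2 * k)! : ℝ) ≤ 4 ^ k * ((k !:ℝ) * (k !:ℝ)) / (Real.sqrt Real.pi * Real.sqrt k) := by
    rw [hf2k, hfk, h4k, hpow2]
    calc s2 * (2 * Real.sqrt k * (4 ^ k * q^2))
        ≤ (s1 * s1 / Real.sqrt Real.pi) * (2 * Real.sqrt k * (4 ^ k * q^2)) :=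
          mul_le_mul_of_nonneg_right hs2' (by positivity)
      _ = s1*s1*q^2*4^k*(2*Real.sqrt k/Real.sqrt Real.pi) := by ring
      _ = s1*s1*q^2*4^k*((2*(k:ℝ))/(Real.sqrt Real.pi * Real.sqrt k)) := by rw [hsc]
      _ = 4 ^ k * ((s1 * (Real.sqrt (2*k) * q)) * (s1 * (Real.sqrt (2*k) * q))) / (Real.sqrt Real.pi * Real.sqrt k) := by
          rw [show (s1 * (Real.sqrt (2*(k:ℝ)) * q)) * (s1 * (Real.sqrt (2*(k:ℝ)) * q))
              = s1*s1*(Real.sqrt (2*(k:ℝ))*Real.sqrt (2*(k:ℝ)))*q^2 by ring, h2k]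
          ring
  rw [le_div_iff₀ (by positivity)]
  calc (Nat.centralBinom k : ℝ) * (Real.sqrt Real.pi * Real.sqrt k)
      = ((Nat.centralBinom k : ℝ) * ((k !:ℝ) * (k !:ℝ))) * (Real.sqrt Real.pi * Real.sqrt k) / ((k !:ℝ) * (k !:ℝ)) := by
        field_simp
    _ = ((2*k)! : ℝ) * (Real.sqrt Real.pi * Real.sqrt k) / ((k !:ℝ) * (k !:ℝ)) := by rw [hspec]
    _ ≤ 4 ^ k := by
        rw [div_le_iff₀ (by positivity)]
        calc ((2*k)! : ℝ) * (Real.sqrt Real.pi * Real.sqrt k)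
            ≤ (4 ^ k * ((k !:ℝ) * (k !:ℝ)) / (Real.sqrt Real.pi * Real.sqrt k)) * (Real.sqrt Real.pi * Real.sqrt k) :=
              mul_le_mul_of_nonneg_right hkey (by positivity)
          _ = 4 ^ k * ((k !:ℝ) * (k !:ℝ)) := by field_simp


lemma sqrt_four : Real.sqrt 4 = 2 := by
  rw [show (4:ℝ) = 2^2 by norm_num, Real.sqrt_sq (by norm_num)]

lemma sqrt_le_two_sqrt {a b : ℝ} (hb : 0 ≤ b) (h : a ≤ 4 * b) :
    Real.sqrt a ≤ 2 * Real.sqrt b := by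
  calc Real.sqrt a ≤ Real.sqrt (4 * b) := Real.sqrt_le_sqrt h
    _ = 2 * Real.sqrt b := by rw [Real.sqrt_mul (by norm_num), sqrt_four]

lemma sqrtPi_pos : (0:ℝ) < Real.sqrt Real.pi := Real.sqrt_pos.mpr Real.pi_pos

lemma aux_calc {A a b : ℝ} (ha : 0 < a) (hA : 0 ≤ A)
    (hab : Real.sqrt b ≤ 2 * Real.sqrt a) :
    (A / (Real.sqrt Real.pi * Real.sqrt a)) * (Real.sqrt Real.pi * Real.sqrt b) ≤ 2 * A := by
  have hsa : 0 < Real.sqrt a := Real.sqrt_pos.mpr ha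
  have hsqpi := sqrtPi_pos
  have h1 : (A / (Real.sqrt Real.pi * Real.sqrt a)) * (Real.sqrt Real.pi * Real.sqrt b)
      = A * Real.sqrt b / Real.sqrt a := by field_simp
  rw [h1, div_le_iff₀ hsa]
  calc A * Real.sqrt b ≤ A * (2 * Real.sqrt a) := by gcongr
    _ = 2 * A * Real.sqrt a := by ring

lemma choose_mid_le (n : ℕ) :
    (Nat.choose n ((n+1)/2) : ℝ) ≤ 2^n * (2 / (Real.sqrt Real.pi * Real.sqrt (n+1))) := by
  have hsqpi := sqrtPi_pos
  have hsn : (0:ℝ) < Real.sqrt Real.pi * Real.sqrt ((n:ℝ)+1) := by positivity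
  rw [mul_div_assoc', le_div_iff₀ hsn]
  rcases Nat.even_or_odd n with ⟨m, hm⟩ | ⟨m, hm⟩
  · rcases Nat.eq_zero_or_pos m with rfl | hmpos
    · subst hm
      norm_num
      have h2 : Real.sqrt Real.pi ≤ 2 := by
        calc Real.sqrt Real.pi ≤ Real.sqrt 4 :=
              Real.sqrt_le_sqrt (by linarith [Real.pi_le_four])
          _ = 2 := sqrt_four
      nlinarith [Real.sqrt_nonneg Real.pi, Real.sqrt_nonneg (1:ℝ), Real.sqrt_one]
    · subst hm
      have hidx : (m + m + 1) / 2 = m := by omega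
      have hcb : Nat.choose (m + m) m = Nat.centralBinom m := by
        rw [Nat.centralBinom]; congr 1; omega
      rw [hidx, hcb]
      have h1 := centralBinom_le_real hmpos
      have hmR : (0:ℝ) < (m:ℝ) := by exact_mod_cast hmpos
      calc (Nat.centralBinom m : ℝ) * (Real.sqrt Real.pi * Real.sqrt (((m+m:ℕ):ℝ)+1))
          ≤ ((4:ℝ)^m / (Real.sqrt Real.pi * Real.sqrt (m:ℝ))) * (Real.sqrt Real.pi * Real.sqrt (((m+m:ℕ):ℝ)+1)) := by
            gcongr
        _ ≤ 2 * (4:ℝ)^m := by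
            apply aux_calc hmR (by positivity)
            apply sqrt_le_two_sqrt hmR.le
            have h1m : (1:ℝ) ≤ (m:ℝ) := by exact_mod_cast hmpos
            push_cast
            linarith
        _ = 2^(m+m) * 2 := by
            rw [show (4:ℝ) = 2^2 by norm_num, ← pow_mul, show 2*m = m+m by omega]
            ring
  · subst hm
    have hidx : (2*m + 1 + 1) / 2 = m + 1 := by omega
    have hcb : 2 * Nat.choose (2*m+1) (m+1) = Nat.centralBinom (m+1) := by
      rw [Nat.centralBinom, show 2*(m+1) = (2*m+1)+1 by omega, Nat.choose_succ_succ (2*m+1) m]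
      have hsymm : Nat.choose (2*m+1) m = Nat.choose (2*m+1) (m+1) := by
        rw [← Nat.choose_symm (show m+1 ≤ 2*m+1 by omega), show 2*m+1-(m+1) = m by omega]
      simp only [Nat.succ_eq_add_one]
      omega
    rw [hidx]
    have h1 := centralBinom_le_real (show 1 ≤ m+1 by omega)
    have hC : (Nat.choose (2*m+1) (m+1) : ℝ) = (Nat.centralBinom (m+1) : ℝ) / 2 := by
      have h := congrArg (Nat.cast (R := ℝ)) hcb
      push_cast at h
      linarith
    have hA : (0:ℝ) ≤ (4:ℝ)^(m+1) / 2 := by positivity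
    have hm1R : (0:ℝ) < ((m:ℝ)+1) := by positivity
    have hcast : Real.sqrt (((m+1:ℕ):ℝ)) = Real.sqrt ((m:ℝ)+1) := by push_cast; ring_nf
    calc (Nat.choose (2*m+1) (m+1) : ℝ) * (Real.sqrt Real.pi * Real.sqrt (((2*m+1:ℕ):ℝ)+1))
        = (Nat.centralBinom (m+1) : ℝ) / 2 * (Real.sqrt Real.pi * Real.sqrt (((2*m+1:ℕ):ℝ)+1)) := by
          rw [hC]
      _ ≤ (((4:ℝ)^(m+1) / (Real.sqrt Real.pi * Real.sqrt (((m+1:ℕ):ℝ)))) / 2) * (Real.sqrt Real.pi * Real.sqrt (((2*m+1:ℕ):ℝ)+1)) := by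
          gcongr
      _ = (((4:ℝ)^(m+1)/2) / (Real.sqrt Real.pi * Real.sqrt ((m:ℝ)+1))) * (Real.sqrt Real.pi * Real.sqrt (((2*m+1:ℕ):ℝ)+1)) := by
          rw [hcast]
          ring
      _ ≤ 2 * ((4:ℝ)^(m+1)/2) := by
          apply aux_calc hm1R hA
          apply sqrt_le_two_sqrt hm1R.le
          push_cast
          linarith
      _ = 2^(2*m+1) * 2 := by
          rw [show (4:ℝ) = 2^2 by norm_num, ← pow_mul]
          rw [show 2*(m+1) = (2*m+1)+1 by omega, pow_succ]
          ring

open Real Nat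

lemma amgm {a b t : ℝ} (ha : 0 ≤ a) (hb : 0 ≤ b) (ht : 0 < t) :
    Real.sqrt (a * b) ≤ (t * a + b / t) / 2 := by
  have h1 : Real.sqrt (t * a) * Real.sqrt (b / t) = Real.sqrt (a * b) := by
    rw [← Real.sqrt_mul (by positivity)]
    congr 1
    field_simp
  nlinarith [sq_nonneg (Real.sqrt (t * a) - Real.sqrt (b / t)),
    Real.sq_sqrt (show (0:ℝ) ≤ t * a by positivity),
    Real.sq_sqrt (show (0:ℝ) ≤ b / t by positivity), h1,
    Real.sqrt_nonneg (t * a), Real.sqrt_nonneg (b / t)]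

variable {ν : ℝ}

/-- the Poisson pmf -/
noncomputable def pp (ν : ℝ) (j : ℕ) : ℝ := Real.exp (-ν) * ν ^ j / (j)!

lemma pp_nonneg (hν : 0 < ν) (j : ℕ) : 0 ≤ pp ν j := by
  unfold pp
  positivity

lemma pp_sum_le (hν : 0 < ν) (n : ℕ) : ∑ j ∈ Finset.range n, pp ν j ≤ 1 := by
  unfold pp
  have h1 : ∑ j ∈ Finset.range n, Real.exp (-ν) * ν ^ j / (j)!
      = Real.exp (-ν) * ∑ j ∈ Finset.range n, ν ^ j / (j)! := by
    rw [Finset.mul_sum]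
    congr 1; ext j; ring
  rw [h1]
  have h2 : ∑ j ∈ Finset.range n, ν ^ j / (j)! ≤ Real.exp ν :=
    Real.sum_le_exp_of_nonneg hν.le n
  calc Real.exp (-ν) * ∑ j ∈ Finset.range n, ν ^ j / (j)!
      ≤ Real.exp (-ν) * Real.exp ν := by
        apply mul_le_mul_of_nonneg_left h2 (Real.exp_pos _).le
    _ = 1 := by rw [← Real.exp_add]; simp

lemma pp_summable (hν : 0 < ν) : Summable (pp ν) := by
  have h := Real.summable_pow_div_factorial ν
  have h2 := h.mul_left (Real.exp (-ν))
  apply h2.congr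
  intro j
  unfold pp
  ring

lemma pp_summable_shift (hν : 0 < ν) (k : ℕ) : Summable (fun j => pp ν (j + k)) :=
  ((summable_nat_add_iff k).mpr (pp_summable hν))

lemma pp_tsum_shift_le (hν : 0 < ν) (k : ℕ) : ∑' j : ℕ, pp ν (j + k) ≤ 1 := by
  apply tsum_le_of_sum_range_le (fun j => pp_nonneg hν _)
  intro n
  have hmap : ∑ j ∈ Finset.range n, pp ν (j + k)
      = ∑ i ∈ (Finset.range n).map (addRightEmbedding k), pp ν i := by
    rw [Finset.sum_map]
    rfl
  rw [hmap]
  calc ∑ i ∈ (Finset.range n).map (addRightEmbedding k), pp ν i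
      ≤ ∑ j ∈ Finset.range (n + k), pp ν j := by
        apply Finset.sum_le_sum_of_subset_of_nonneg
        · intro i hi
          simp only [Finset.mem_map, Finset.mem_range] at hi ⊢
          obtain ⟨j, hj, rfl⟩ := hi
          simp [addRightEmbedding]
          omega
        · exact fun i _ _ => pp_nonneg hν i
    _ ≤ 1 := pp_sum_le hν _


lemma sqrt_one_le {x : ℝ} (hx : 1 ≤ x) : 1 ≤ Real.sqrt x := by
  rw [show (1:ℝ) = Real.sqrt 1 by simp]
  exact Real.sqrt_le_sqrt hx

lemma main_real (hν : 3 ≤ ν) :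
    pp ν 0 * 1 + ∑' j : ℕ, pp ν (j+1) * (2 / (Real.sqrt Real.pi * Real.sqrt ((j:ℝ)+1)))
      ≤ 2.5 / ν ^ ((3:ℝ)/2) + (2 / Real.sqrt Real.pi) * (1 / Real.sqrt ν + 3 / ν ^ ((3:ℝ)/2)) := by
  have hν0 : (0:ℝ) < ν := by linarith
  have hsν : (0:ℝ) < Real.sqrt ν := Real.sqrt_pos.mpr hν0
  have hsqpi : (0:ℝ) < Real.sqrt Real.pi := Real.sqrt_pos.mpr Real.pi_pos
  have hrpow : ν ^ ((3:ℝ)/2) = ν * Real.sqrt ν := by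
    rw [show (3:ℝ)/2 = 1 + 1/2 by norm_num, Real.rpow_add hν0, Real.rpow_one,
      Real.sqrt_eq_rpow]
  set t : ℝ := Real.sqrt (ν + 2) with htdef
  have ht : 0 < t := Real.sqrt_pos.mpr (by linarith)
  have ht2 : t ^ 2 = ν + 2 := Real.sq_sqrt (by linarith)
  -- identity: pp (j+1) / (j+2) = pp (j+2) / ν
  have hf1id : ∀ j : ℕ, pp ν (j+1) * (1/((j:ℝ)+2)) = pp ν (j+2) * (1/ν) := by
    intro j
    unfold pp
    have hfact : (((j+2))! : ℝ) = ((j:ℝ)+2) * (((j+1))! : ℝ) := by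
      rw [show j+2 = (j+1)+1 by omega, Nat.factorial_succ (j+1)]
      push_cast
      ring
    rw [hfact, pow_succ ν (j+1)]
    have h1 : ((((j+1))! : ℝ)) ≠ 0 := by
      exact_mod_cast Nat.factorial_ne_zero (j+1)
    field_simp
  have hsumf1 : Summable (fun j : ℕ => pp ν (j+1) * (1/((j:ℝ)+2))) := by
    apply Summable.congr ((pp_summable_shift hν0 2).mul_right (1/ν))
    intro j
    rw [← hf1id j]
  have hA : ∑' j : ℕ, pp ν (j+1) * (1/((j:ℝ)+2)) ≤ 1/ν := by
    calc ∑' j : ℕ, pp ν (j+1) * (1/((j:ℝ)+2)) = ∑' j : ℕ, pp ν (j+2) * (1/ν) := by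
          exact tsum_congr hf1id
      _ = (∑' j : ℕ, pp ν (j+2)) * (1/ν) := tsum_mul_right
      _ ≤ 1 * (1/ν) := by
          apply mul_le_mul_of_nonneg_right (pp_tsum_shift_le hν0 2) (by positivity)
      _ = 1/ν := one_mul _
  -- second series
  have hsuminvsucc : Summable (fun j : ℕ => pp ν (j+1) * (1/((j:ℝ)+1))) := by
    apply Summable.of_nonneg_of_le
      (fun j => mul_nonneg (pp_nonneg hν0 (j+1)) (by positivity))
      (fun j => ?_) ((pp_summable_shift hν0 1))
    calc pp ν (j+1) * (1/((j:ℝ)+1)) ≤ pp ν (j+1) * 1 := by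
          apply mul_le_mul_of_nonneg_left _ (pp_nonneg hν0 _)
          rw [div_le_one (by positivity)]
          linarith
      _ = pp ν (j+1) := mul_one _
  have hinvsucc : ∑' j : ℕ, pp ν (j+1) * (1/((j:ℝ)+1)) ≤ 2/ν := by
    calc ∑' j : ℕ, pp ν (j+1) * (1/((j:ℝ)+1))
        ≤ ∑' j : ℕ, 2 * (pp ν (j+1) * (1/((j:ℝ)+2))) := by
          apply Summable.tsum_le_tsum _ hsuminvsucc (hsumf1.mul_left 2)
          intro j
          have hle : (1:ℝ)/((j:ℝ)+1) ≤ 2/((j:ℝ)+2) := by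
            rw [div_le_div_iff₀ (by positivity) (by positivity)]
            linarith
          calc pp ν (j+1) * (1/((j:ℝ)+1)) ≤ pp ν (j+1) * (2/((j:ℝ)+2)) :=
                mul_le_mul_of_nonneg_left hle (pp_nonneg hν0 _)
            _ = 2 * (pp ν (j+1) * (1/((j:ℝ)+2))) := by ring
      _ = 2 * ∑' j : ℕ, pp ν (j+1) * (1/((j:ℝ)+2)) := tsum_mul_left
      _ ≤ 2 * (1/ν) := by
          apply mul_le_mul_of_nonneg_left hA (by norm_num)
      _ = 2/ν := by ring
  have hsumf2 : Summable (fun j : ℕ => pp ν (j+1) * (1 + 1/((j:ℝ)+1))) := by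
    apply Summable.congr ((pp_summable_shift hν0 1).add hsuminvsucc)
    intro j
    ring
  have hB : ∑' j : ℕ, pp ν (j+1) * (1 + 1/((j:ℝ)+1)) ≤ 1 + 2/ν := by
    calc ∑' j : ℕ, pp ν (j+1) * (1 + 1/((j:ℝ)+1))
        = ∑' j : ℕ, (pp ν (j+1) + pp ν (j+1) * (1/((j:ℝ)+1))) := by
          apply tsum_congr; intro j; ring
      _ = (∑' j : ℕ, pp ν (j+1)) + ∑' j : ℕ, pp ν (j+1) * (1/((j:ℝ)+1)) :=
          Summable.tsum_add (pp_summable_shift hν0 1) hsuminvsucc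
      _ ≤ 1 + 2/ν := _root_.add_le_add (pp_tsum_shift_le hν0 1) hinvsucc
  -- pointwise AM-GM
  have hpt : ∀ j : ℕ, pp ν (j+1) * (1/Real.sqrt ((j:ℝ)+1))
      ≤ (t/2) * (pp ν (j+1) * (1/((j:ℝ)+2))) + (1/(2*t)) * (pp ν (j+1) * (1 + 1/((j:ℝ)+1))) := by
    intro j
    set a : ℝ := 1/((j:ℝ)+2) with hadef
    set b : ℝ := 1 + 1/((j:ℝ)+1) with hbdef
    have hb' : b = ((j:ℝ)+2)/((j:ℝ)+1) := by
      rw [hbdef]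
      field_simp
      ring
    have hab : a * b = 1/((j:ℝ)+1) := by
      rw [hadef, hb', _root_.div_mul_div_comm, one_mul,
        div_eq_div_iff (by positivity) (by positivity)]
      ring
    have hsab : Real.sqrt (a*b) = 1/Real.sqrt ((j:ℝ)+1) := by
      rw [hab, one_div, one_div, Real.sqrt_inv]
    have hgm := amgm (show (0:ℝ) ≤ a by positivity)
      (show (0:ℝ) ≤ b by rw [hbdef]; positivity) ht
    rw [hsab] at hgm
    have hppn := pp_nonneg hν0 (j+1)
    calc pp ν (j+1) * (1/Real.sqrt ((j:ℝ)+1)) ≤ pp ν (j+1) * ((t * a + b / t) / 2) :=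
          mul_le_mul_of_nonneg_left hgm hppn
      _ = (t/2) * (pp ν (j+1) * a) + (1/(2*t)) * (pp ν (j+1) * b) := by
          field_simp
  have hsumS : Summable (fun j : ℕ => pp ν (j+1) * (1/Real.sqrt ((j:ℝ)+1))) := by
    apply Summable.of_nonneg_of_le
      (fun j => mul_nonneg (pp_nonneg hν0 (j+1)) (by positivity))
      (fun j => ?_) (pp_summable_shift hν0 1)
    calc pp ν (j+1) * (1/Real.sqrt ((j:ℝ)+1)) ≤ pp ν (j+1) * 1 := by
          apply mul_le_mul_of_nonneg_left _ (pp_nonneg hν0 _)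
          rw [div_le_one (Real.sqrt_pos.mpr (by positivity))]
          exact sqrt_one_le (by linarith [Nat.cast_nonneg (α := ℝ) j])
      _ = pp ν (j+1) := mul_one _
  have hS : ∑' j : ℕ, pp ν (j+1) * (1/Real.sqrt ((j:ℝ)+1)) ≤ t/ν := by
    calc ∑' j : ℕ, pp ν (j+1) * (1/Real.sqrt ((j:ℝ)+1))
        ≤ ∑' j : ℕ, ((t/2) * (pp ν (j+1) * (1/((j:ℝ)+2))) + (1/(2*t)) * (pp ν (j+1) * (1 + 1/((j:ℝ)+1)))) := by
          apply Summable.tsum_le_tsum hpt hsumS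
          exact (hsumf1.mul_left (t/2)).add (hsumf2.mul_left (1/(2*t)))
      _ = (t/2) * (∑' j : ℕ, pp ν (j+1) * (1/((j:ℝ)+2)))
            + (1/(2*t)) * (∑' j : ℕ, pp ν (j+1) * (1 + 1/((j:ℝ)+1))) := by
          rw [Summable.tsum_add (hsumf1.mul_left (t/2)) (hsumf2.mul_left (1/(2*t))),
            tsum_mul_left, tsum_mul_left]
      _ ≤ (t/2) * (1/ν) + (1/(2*t)) * (1 + 2/ν) := by
          apply _root_.add_le_add
          · exact mul_le_mul_of_nonneg_left hA (by positivity)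
          · exact mul_le_mul_of_nonneg_left hB (by positivity)
      _ = t/ν := by
          rw [show (1:ℝ) + 2/ν = t^2/ν by rw [ht2]; field_simp]
          field_simp
          ring
  have htν : t/ν ≤ 1/Real.sqrt ν + 1/ν^((3:ℝ)/2) := by
    have h1 : t * Real.sqrt ν = Real.sqrt ((ν+2)*ν) := by
      rw [htdef, ← Real.sqrt_mul (by linarith)]
    have h2 : Real.sqrt ((ν+2)*ν) ≤ ν + 1 := by
      rw [show ν + 1 = Real.sqrt ((ν+1)^2) by rw [Real.sqrt_sq (by linarith)]]
      apply Real.sqrt_le_sqrt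
      nlinarith
    have h3 : t ≤ (ν+1)/Real.sqrt ν := by
      rw [le_div_iff₀ hsν, h1]
      exact h2
    have e1 : ((ν+1)/Real.sqrt ν) * ν⁻¹ = 1/Real.sqrt ν + 1/(ν*Real.sqrt ν) := by
      field_simp
      try ring
      try tauto
    calc t/ν = t * ν⁻¹ := div_eq_mul_inv t ν
      _ ≤ ((ν+1)/Real.sqrt ν) * ν⁻¹ := mul_le_mul_of_nonneg_right h3 (by positivity)
      _ = 1/Real.sqrt ν + 1/ν^((3:ℝ)/2) := by rw [hrpow, e1]
  have hexp_le : pp ν 0 ≤ 2.5/ν^((3:ℝ)/2) := by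
    have hpp0 : pp ν 0 = Real.exp (-ν) := by unfold pp; simp
    have hsle : Real.sqrt ν ≤ ν := by
      calc Real.sqrt ν ≤ Real.sqrt (ν^2) := Real.sqrt_le_sqrt (by nlinarith)
        _ = ν := Real.sqrt_sq hν0.le
    have hq : ν^2/2 ≤ Real.exp ν := by
      have h := Real.sum_le_exp_of_nonneg hν0.le 3
      have : ∑ i ∈ Finset.range 3, ν^i/(i)! = 1 + ν + ν^2/2 := by
        rw [Finset.sum_range_succ, Finset.sum_range_succ, Finset.sum_range_succ,
          Finset.sum_range_zero]
        norm_num [Nat.factorial]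
      rw [this] at h
      linarith
    rw [hpp0, Real.exp_neg, hrpow, inv_eq_one_div,
      div_le_div_iff₀ (Real.exp_pos ν) (by positivity)]
    nlinarith [Real.exp_pos ν, hsν, mul_le_mul_of_nonneg_left hsle hν0.le]
  -- assemble
  have hmulform : ∀ j : ℕ, pp ν (j+1) * (2 / (Real.sqrt Real.pi * Real.sqrt ((j:ℝ)+1)))
      = (2/Real.sqrt Real.pi) * (pp ν (j+1) * (1/Real.sqrt ((j:ℝ)+1))) := by
    intro j
    field_simp
  calc pp ν 0 * 1 + ∑' j : ℕ, pp ν (j+1) * (2 / (Real.sqrt Real.pi * Real.sqrt ((j:ℝ)+1)))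
      = pp ν 0 + (2/Real.sqrt Real.pi) * ∑' j : ℕ, pp ν (j+1) * (1/Real.sqrt ((j:ℝ)+1)) := by
        have hsum_eq : ∑' j : ℕ, pp ν (j+1) * (2 / (Real.sqrt Real.pi * Real.sqrt ((j:ℝ)+1)))
            = (2/Real.sqrt Real.pi) * ∑' j : ℕ, pp ν (j+1) * (1/Real.sqrt ((j:ℝ)+1)) := by
          rw [← tsum_mul_left]
          exact tsum_congr hmulform
        rw [mul_one, hsum_eq]
    _ ≤ 2.5/ν^((3:ℝ)/2) + (2/Real.sqrt Real.pi) * (1/Real.sqrt ν + 1/ν^((3:ℝ)/2)) := by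
        apply _root_.add_le_add hexp_le
        apply mul_le_mul_of_nonneg_left (hS.trans htν) (by positivity)
    _ ≤ 2.5 / ν ^ ((3:ℝ)/2) + (2 / Real.sqrt Real.pi) * (1 / Real.sqrt ν + 3 / ν ^ ((3:ℝ)/2)) := by
        have hp32 : (0:ℝ) < ν^((3:ℝ)/2) := by
          rw [hrpow]; positivity
        apply _root_.add_le_add le_rfl
        apply mul_le_mul_of_nonneg_left _ (by positivity)
        apply _root_.add_le_add le_rfl
        gcongr
        norm_num

open MeasureTheory ProbabilityTheory Nat
open scoped ENNReal

section Meas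

variable {Ω : Type*} [MeasurableSpace Ω]

/-- the auxiliary events -/
def BB (X : ℕ → Ω → ℤ) (V : ℕ → Ω → ℤ) (n k : ℕ) : Set Ω :=
  {ω | (∀ m ≤ n, 1 ≤ V m ω) ∧ V n ω = (k : ℤ) ∧ ∀ i ∈ Finset.Icc 1 n, (X i ω = 1 ∨ X i ω = -1)}

/-- restriction map -/
def Wn (X : ℕ → Ω → ℤ) (n : ℕ) : Ω → ((Finset.Icc 1 n : Finset ℕ) → ℤ) := fun ω i => X i ω

/-- partial sums on coordinates -/
def SumTo (n m : ℕ) (g : (Finset.Icc 1 n : Finset ℕ) → ℤ) : ℤ :=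
  ∑ i ∈ Finset.univ.filter (fun i : (Finset.Icc 1 n : Finset ℕ) => (i : ℕ) ≤ m), g i

lemma sumTo_eq (X : ℕ → Ω → ℤ) (n m : ℕ) (hm : m ≤ n) (ω : Ω) :
    SumTo n m (Wn X n ω) = ∑ k ∈ Finset.Icc 1 m, X k ω := by
  unfold SumTo Wn
  rw [Finset.sum_filter]
  rw [Finset.sum_coe_sort (Finset.Icc 1 n) (fun a => if a ≤ m then X a ω else 0)]
  rw [← Finset.sum_filter]
  congr 1
  ext i
  simp only [Finset.mem_filter, Finset.mem_Icc]
  omega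

/-- the target set in sequence space -/
def SS (n k : ℕ) : Set ((Finset.Icc 1 n : Finset ℕ) → ℤ) :=
  {g | (∀ m ≤ n, 1 ≤ 1 + SumTo n m g) ∧ 1 + SumTo n n g = (k : ℤ)
    ∧ ∀ i : (Finset.Icc 1 n : Finset ℕ), g i = 1 ∨ g i = -1}

lemma sumTo_measurable (n m : ℕ) : Measurable (SumTo n m) := by
  unfold SumTo
  apply Finset.measurable_sum
  intro i _
  exact measurable_pi_apply i

lemma SS_measurable (n k : ℕ) : MeasurableSet (SS n k) := by
  have h : SS n k = (⋂ m, ⋂ (_ : m ≤ n), (fun g => SumTo n m g) ⁻¹' (Set.Ici (0:ℤ)))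
      ∩ (((fun g => SumTo n n g) ⁻¹' {(k:ℤ) - 1})
      ∩ (⋂ i : (Finset.Icc 1 n : Finset ℕ), (fun g => g i) ⁻¹' ({1, -1} : Set ℤ))) := by
    ext g
    simp only [SS, Set.mem_setOf_eq, Set.mem_inter_iff, Set.mem_iInter, Set.mem_preimage,
      Set.mem_Ici, Set.mem_singleton_iff, Set.mem_insert_iff]
    constructor
    · rintro ⟨h1, h2, h3⟩
      exact ⟨fun m hm => by linarith [h1 m hm], by omega, fun i => h3 i⟩
    · rintro ⟨h1, h2, h3⟩
      exact ⟨fun m hm => by linarith [h1 m hm], by omega, fun i => h3 i⟩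
  rw [h]
  exact ((MeasurableSet.iInter fun m => MeasurableSet.iInter fun _ =>
      (sumTo_measurable n m) measurableSet_Ici).inter
    (((sumTo_measurable n n) (measurableSet_singleton _)).inter
      (MeasurableSet.iInter fun i => (measurable_pi_apply i) (by measurability))))

lemma BB_eq_preimage (X : ℕ → Ω → ℤ) (V : ℕ → Ω → ℤ)
    (hV : ∀ n ω, V n ω = 1 + ∑ k ∈ Finset.Icc 1 n, X k ω) (n k : ℕ) :
    BB X V n k = (Wn X n) ⁻¹' (SS n k) := by
  ext ω
  simp only [BB, SS, Set.mem_setOf_eq, Set.mem_preimage]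
  have hs : ∀ m ≤ n, 1 + SumTo n m (Wn X n ω) = V m ω := by
    intro m hm
    rw [sumTo_eq X n m hm ω, hV]
  constructor
  · rintro ⟨h1, h2, h3⟩
    refine ⟨fun m hm => by rw [hs m hm]; exact h1 m hm, by rw [hs n le_rfl]; exact h2, ?_⟩
    intro i
    exact h3 i i.2
  · rintro ⟨h1, h2, h3⟩
    refine ⟨fun m hm => by rw [← hs m hm]; exact h1 m hm, by rw [← hs n le_rfl]; exact h2, ?_⟩
    intro i hi
    exact h3 ⟨i, hi⟩


lemma ofReal_half : ENNReal.ofReal (1/2) = (2:ℝ≥0∞)⁻¹ := by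
  rw [show (1:ℝ)/2 = (2:ℝ)⁻¹ by norm_num, ENNReal.ofReal_inv_of_pos (by norm_num)]
  norm_num

lemma BB_split (μ : Measure Ω) [IsProbabilityMeasure μ]
    (X : ℕ → Ω → ℤ) (hXmeas : ∀ n, Measurable (X n))
    (hindep : iIndepFun X μ)
    (V : ℕ → Ω → ℤ) (hV : ∀ n ω, V n ω = 1 + ∑ k ∈ Finset.Icc 1 n, X k ω)
    (n k : ℕ) (c : ℤ) (hc : μ {ω | X (n+1) ω = c} = ENNReal.ofReal (1/2)) :
    μ (BB X V n k ∩ {ω | X (n+1) ω = c}) = μ (BB X V n k) * ENNReal.ofReal (1/2) := by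
  have hdisj : Disjoint (Finset.Icc 1 n) ({n+1} : Finset ℕ) := by
    rw [Finset.disjoint_left]
    intro a ha hb
    simp only [Finset.mem_Icc] at ha
    simp only [Finset.mem_singleton] at hb
    omega
  have hWind := hindep.indepFun_finset (Finset.Icc 1 n) ({n+1} : Finset ℕ) hdisj hXmeas
  have hmem : (n+1) ∈ ({n+1} : Finset ℕ) := Finset.mem_singleton_self _
  set W2 : Ω → (({n+1} : Finset ℕ) → ℤ) := fun ω i => X i ω with hW2
  have h2 : {ω | X (n+1) ω = c} = W2 ⁻¹' {h | h ⟨n+1, hmem⟩ = c} := rfl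
  have hT2meas : MeasurableSet {h : ({n+1} : Finset ℕ) → ℤ | h ⟨n+1, hmem⟩ = c} := by
    have : {h : ({n+1} : Finset ℕ) → ℤ | h ⟨n+1, hmem⟩ = c}
        = (fun h : ({n+1} : Finset ℕ) → ℤ => h ⟨n+1, hmem⟩) ⁻¹' {c} := rfl
    rw [this]
    exact (measurable_pi_apply _) (measurableSet_singleton c)
  have hBBpre := BB_eq_preimage X V hV n k
  have hfact := hWind.measure_inter_preimage_eq_mul (SS n k) {h | h ⟨n+1, hmem⟩ = c}
    (SS_measurable n k) hT2meas
  have hgoal : BB X V n k ∩ {ω | X (n+1) ω = c}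
      = (fun a (i : (Finset.Icc 1 n : Finset ℕ)) => X i a) ⁻¹' SS n k
        ∩ W2 ⁻¹' {h | h ⟨n+1, hmem⟩ = c} := by
    rw [hBBpre]; rfl
  rw [hgoal, hfact, ← h2, hc, hBBpre]
  rfl

lemma BB_empty (μ : Measure Ω) (X : ℕ → Ω → ℤ) (V : ℕ → Ω → ℤ) (n : ℕ) :
    BB X V n 0 = (∅ : Set Ω) := by
  ext ω
  simp only [BB, Set.mem_setOf_eq, Set.mem_empty_iff_false, iff_false]
  rintro ⟨h1, h2, -⟩
  have := h1 n le_rfl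
  rw [h2] at this
  omega

lemma BB_bound (μ : Measure Ω) [IsProbabilityMeasure μ]
    (X : ℕ → Ω → ℤ) (hXmeas : ∀ n, Measurable (X n))
    (hindep : iIndepFun X μ)
    (hup : ∀ n, μ {ω | X n ω = 1} = ENNReal.ofReal (1 / 2))
    (hdown : ∀ n, μ {ω | X n ω = -1} = ENNReal.ofReal (1 / 2))
    (V : ℕ → Ω → ℤ) (hV : ∀ n ω, V n ω = 1 + ∑ k ∈ Finset.Icc 1 n, X k ω) :
    ∀ n k, μ (BB X V n k) ≤ (dd n k : ℝ≥0∞) / 2 ^ n := by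
  intro n
  induction n with
  | zero =>
    intro k
    rcases eq_or_ne k 1 with rfl | hk
    · have h1 : dd 0 1 = 1 := rfl
      rw [h1]
      simpa using prob_le_one
    · have hempty : BB X V 0 k = ∅ := by
        ext ω
        simp only [BB, Set.mem_setOf_eq, Set.mem_empty_iff_false, iff_false]
        rintro ⟨-, h2, -⟩
        rw [hV 0 ω, Finset.Icc_eq_empty (by omega), Finset.sum_empty] at h2
        have : (k:ℤ) = 1 := by omega
        exact hk (by exact_mod_cast this)
      rw [hempty]
      simp
  | succ n ih =>
    intro k
    match k with
    | 0 =>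
      rw [BB_empty μ X V]
      simp
    | (k'+1) =>
      have hincl : BB X V (n+1) (k'+1) ⊆
          (BB X V n k' ∩ {ω | X (n+1) ω = 1}) ∪ (BB X V n (k'+2) ∩ {ω | X (n+1) ω = -1}) := by
        intro ω hω
        obtain ⟨h1, h2, h3⟩ := hω
        have hx : X (n+1) ω = 1 ∨ X (n+1) ω = -1 := h3 (n+1) (by simp)
        have hVs : V (n+1) ω = V n ω + X (n+1) ω := by
          rw [hV (n+1), hV n, Finset.sum_Icc_succ_top (show 1 ≤ n+1 by omega)]
          ring
        have h1' : ∀ m ≤ n, 1 ≤ V m ω := fun m hm => h1 m (by omega)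
        have h3' : ∀ i ∈ Finset.Icc 1 n, X i ω = 1 ∨ X i ω = -1 := by
          intro i hi
          simp only [Finset.mem_Icc] at hi
          exact h3 i (by simp only [Finset.mem_Icc]; omega)
        rcases hx with hx | hx
        · left
          refine ⟨⟨h1', ?_, h3'⟩, hx⟩
          rw [hVs, hx] at h2
          push_cast at h2 ⊢
          omega
        · right
          refine ⟨⟨h1', ?_, h3'⟩, hx⟩
          rw [hVs, hx] at h2
          push_cast at h2 ⊢
          omega
      calc μ (BB X V (n+1) (k'+1))
          ≤ μ ((BB X V n k' ∩ {ω | X (n+1) ω = 1}) ∪ (BB X V n (k'+2) ∩ {ω | X (n+1) ω = -1})) :=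
            measure_mono hincl
        _ ≤ μ (BB X V n k' ∩ {ω | X (n+1) ω = 1}) + μ (BB X V n (k'+2) ∩ {ω | X (n+1) ω = -1}) :=
            measure_union_le _ _
        _ = μ (BB X V n k') * ENNReal.ofReal (1/2) + μ (BB X V n (k'+2)) * ENNReal.ofReal (1/2) := by
            rw [BB_split μ X hXmeas hindep V hV n k' 1 (hup (n+1)),
              BB_split μ X hXmeas hindep V hV n (k'+2) (-1) (hdown (n+1))]
        _ ≤ ((dd n k' : ℝ≥0∞) / 2^n) * ENNReal.ofReal (1/2)
              + ((dd n (k'+2) : ℝ≥0∞) / 2^n) * ENNReal.ofReal (1/2) := by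
            gcongr <;> [exact ih k'; exact ih (k'+2)]
        _ = ((dd n k' : ℝ≥0∞) + (dd n (k'+2) : ℝ≥0∞)) / 2^(n+1) := by
            rw [ofReal_half]
            rw [ENNReal.add_div]
            congr 1 <;>
            · rw [div_eq_mul_inv, div_eq_mul_inv, pow_succ,
                ENNReal.mul_inv (Or.inl (by positivity)) (Or.inl (by simp))]
              ring
        _ ≤ ((dd (n+1) (k'+1) : ℕ) : ℝ≥0∞) / 2^(n+1) := by
            gcongr
            rw [← Nat.cast_add]
            exact_mod_cast dd_rec n k'

lemma E_bound (μ : Measure Ω) [IsProbabilityMeasure μ]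
    (X : ℕ → Ω → ℤ) (hXmeas : ∀ n, Measurable (X n))
    (hindep : iIndepFun X μ)
    (hup : ∀ n, μ {ω | X n ω = 1} = ENNReal.ofReal (1 / 2))
    (hdown : ∀ n, μ {ω | X n ω = -1} = ENNReal.ofReal (1 / 2))
    (V : ℕ → Ω → ℤ) (hV : ∀ n ω, V n ω = 1 + ∑ k ∈ Finset.Icc 1 n, X k ω) (n : ℕ) :
    μ {ω | ∀ m ≤ n, V m ω ≠ 0} ≤ (Nat.choose n ((n+1)/2) : ℝ≥0∞) / 2^n := by
  set Nn : Set Ω := {ω | ∀ i ∈ Finset.Icc 1 n, X i ω = 1 ∨ X i ω = -1} with hNn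
  have hzero : ∀ i : ℕ, μ {ω | ¬(X i ω = 1 ∨ X i ω = -1)} = 0 := by
    intro i
    have hAi : μ ({ω | X i ω = 1} ∪ {ω | X i ω = -1}) = 1 := by
      rw [measure_union _ (show MeasurableSet {ω | X i ω = -1} from (hXmeas i) (measurableSet_singleton (-1))), hup i, hdown i]
      · rw [← ENNReal.ofReal_add (by norm_num) (by norm_num)]
        norm_num
      · rw [Set.disjoint_left]
        intro ω h1 h2
        simp only [Set.mem_setOf_eq] at h1 h2
        omega
    have hmeas : MeasurableSet ({ω | X i ω = 1} ∪ {ω | X i ω = -1}) :=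
      ((hXmeas i) (measurableSet_singleton 1)).union ((hXmeas i) (measurableSet_singleton (-1)))
    have hcompl := measure_compl hmeas (measure_ne_top μ _)
    rw [hAi, measure_univ, tsub_self] at hcompl
    have hseteq : {ω | ¬(X i ω = 1 ∨ X i ω = -1)} = ({ω | X i ω = 1} ∪ {ω | X i ω = -1})ᶜ := by
      ext ω
      simp only [Set.mem_setOf_eq, Set.mem_compl_iff, Set.mem_union]
    rw [hseteq, hcompl]
  have hNc : μ Nnᶜ = 0 := by
    have hNceq : Nnᶜ = ⋃ i ∈ Finset.Icc 1 n, {ω | ¬(X i ω = 1 ∨ X i ω = -1)} := by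
      ext ω
      simp only [hNn, Set.mem_compl_iff, Set.mem_setOf_eq, not_forall, Set.mem_iUnion,
        Finset.mem_Icc, exists_prop]
      try tauto
    rw [hNceq]
    refine le_antisymm ?_ _root_.zero_le
    calc μ (⋃ i ∈ Finset.Icc 1 n, {ω | ¬(X i ω = 1 ∨ X i ω = -1)})
        ≤ ∑ i ∈ Finset.Icc 1 n, μ {ω | ¬(X i ω = 1 ∨ X i ω = -1)} :=
          measure_biUnion_finset_le _ _
      _ = 0 := Finset.sum_eq_zero fun i _ => hzero i
  have hsub : {ω | ∀ m ≤ n, V m ω ≠ 0} ∩ Nn ⊆ ⋃ k ∈ Finset.Icc 1 (n+1), BB X V n k := by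
    rintro ω ⟨hE, hNω⟩
    simp only [Set.mem_setOf_eq] at hE hNω
    have hpos : ∀ m ≤ n, 1 ≤ V m ω := by
      intro m
      induction m with
      | zero =>
        intro _
        rw [hV 0 ω, Finset.Icc_eq_empty (by omega), Finset.sum_empty]
        omega
      | succ m ihm =>
        intro hm
        have hVm : 1 ≤ V m ω := ihm (by omega)
        have hx : X (m+1) ω = 1 ∨ X (m+1) ω = -1 :=
          hNω (m+1) (by simp only [Finset.mem_Icc]; omega)
        have hVs : V (m+1) ω = V m ω + X (m+1) ω := by
          rw [hV (m+1), hV m, Finset.sum_Icc_succ_top (show 1 ≤ m+1 by omega)]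
          ring
        have hne : V (m+1) ω ≠ 0 := hE (m+1) hm
        rcases hx with hx | hx <;> omega
    have hub : V n ω ≤ (n:ℤ) + 1 := by
      rw [hV n]
      have hsle : ∑ k ∈ Finset.Icc 1 n, X k ω ≤ ∑ _k ∈ Finset.Icc 1 n, (1:ℤ) := by
        apply Finset.sum_le_sum
        intro i hi
        rcases hNω i hi with hx | hx <;> omega
      rw [Finset.sum_const, Nat.card_Icc] at hsle
      simp at hsle
      have : ((n + 1 - 1 : ℕ) : ℤ) = n := by omega
      omega
    have hlb : 1 ≤ V n ω := hpos n le_rfl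
    set k : ℕ := (V n ω).toNat with hkdef
    have hkV : (k : ℤ) = V n ω := Int.toNat_of_nonneg (by omega)
    simp only [Set.mem_iUnion]
    refine ⟨k, ?_, ?_⟩
    · simp only [Finset.mem_Icc]
      omega
    · exact ⟨hpos, hkV.symm, hNω⟩
  calc μ {ω | ∀ m ≤ n, V m ω ≠ 0}
      ≤ μ (({ω | ∀ m ≤ n, V m ω ≠ 0} ∩ Nn) ∪ Nnᶜ) := by
        apply measure_mono
        intro ω hω
        by_cases h : ω ∈ Nn
        · exact Or.inl ⟨hω, h⟩
        · exact Or.inr h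
    _ ≤ μ ({ω | ∀ m ≤ n, V m ω ≠ 0} ∩ Nn) + μ Nnᶜ := measure_union_le _ _
    _ = μ ({ω | ∀ m ≤ n, V m ω ≠ 0} ∩ Nn) := by rw [hNc, add_zero]
    _ ≤ μ (⋃ k ∈ Finset.Icc 1 (n+1), BB X V n k) := measure_mono hsub
    _ ≤ ∑ k ∈ Finset.Icc 1 (n+1), μ (BB X V n k) := measure_biUnion_finset_le _ _
    _ ≤ ∑ k ∈ Finset.Icc 1 (n+1), (dd n k : ℝ≥0∞) / 2^n := by
        apply Finset.sum_le_sum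
        intro k _
        exact BB_bound μ X hXmeas hindep hup hdown V hV n k
    _ = ((∑ k ∈ Finset.Icc 1 (n+1), dd n k : ℕ) : ℝ≥0∞) / 2^n := by
        push_cast
        simp only [div_eq_mul_inv, ← Finset.sum_mul]
    _ ≤ (Nat.choose n ((n+1)/2) : ℝ≥0∞) / 2^n := by
        gcongr
        exact_mod_cast dd_sum n (n+1)

end Meas

noncomputable def FF (ν : ℝ) : ℕ → ℝ
  | 0 => pp ν 0 * 1
  | (n+1) => pp ν (n+1) * (2 / (Real.sqrt Real.pi * Real.sqrt ((n:ℝ)+1)))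

end PHT

open PHT in
/-- Poissonized hitting time tail upper bound (critical case): for an i.i.d. symmetric
±1 random walk `V_n = 1 + Σ_{k=1}^n X_k` with hitting time `γ = inf{n : V_n = 0}`
(valued in `ℕ∞`), and `Y` a `Poisson(ν)` random variable (`ν ≥ 3`) independent of
the sequence `(X_n)`: `ℙ(γ ≥ Y) ≤ 2.5/ν^{3/2} + (2/√π)(1/√ν + 3/ν^{3/2})`. -/
theorem poissonized_hitting_time_tail_upper_bound
    {Ω : Type*} [MeasurableSpace Ω] (μ : Measure Ω) [IsProbabilityMeasure μ]
    (X : ℕ → Ω → ℤ) (hXmeas : ∀ n, Measurable (X n))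
    (hindep : iIndepFun X μ)
    (hup : ∀ n, μ {ω | X n ω = 1} = ENNReal.ofReal (1 / 2))
    (hdown : ∀ n, μ {ω | X n ω = -1} = ENNReal.ofReal (1 / 2))
    (V : ℕ → Ω → ℤ) (hV : ∀ n ω, V n ω = 1 + ∑ k ∈ Finset.Icc 1 n, X k ω)
    (γ : Ω → ℕ∞) (hγ : ∀ ω, γ ω = sInf {t : ℕ∞ | ∃ n : ℕ, (n : ℕ∞) = t ∧ V n ω = 0})
    (ν : ℝ) (hν : 3 ≤ ν)
    (Y : Ω → ℕ) (hYmeas : Measurable Y)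
    (hYlaw : ∀ j : ℕ, μ {ω | Y ω = j}
      = ENNReal.ofReal (Real.exp (-ν) * ν ^ j / Nat.factorial j))
    (hYindep : IndepFun (fun ω n => X n ω) Y μ) :
    μ {ω | ((Y ω : ℕ∞)) ≤ γ ω}
      ≤ ENNReal.ofReal
          (2.5 / ν ^ ((3 : ℝ) / 2)
            + (2 / Real.sqrt Real.pi) * (1 / Real.sqrt ν + 3 / ν ^ ((3 : ℝ) / 2))) := by
  classical
  have hν0 : (0:ℝ) < ν := by linarith
  set W : Ω → (ℕ → ℤ) := fun ω n => X n ω with hW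
  set Tj : ℕ → Set (ℕ → ℤ) := fun j =>
    {f | ∀ m : ℕ, (1 + ∑ k ∈ Finset.Icc 1 m, f k = 0) → ((j:ℕ∞) ≤ (m:ℕ∞))} with hTj
  have hTmeas : ∀ j, MeasurableSet (Tj j) := by
    intro j
    have heq : Tj j = ⋂ m : ℕ,
        {f : ℕ → ℤ | (1 + ∑ k ∈ Finset.Icc 1 m, f k = 0) → ((j:ℕ∞) ≤ (m:ℕ∞))} := by
      ext f
      simp only [hTj, Set.mem_setOf_eq, Set.mem_iInter]
    rw [heq]
    apply MeasurableSet.iInter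
    intro m
    by_cases hjm : (j:ℕ∞) ≤ (m:ℕ∞)
    · have : {f : ℕ → ℤ | (1 + ∑ k ∈ Finset.Icc 1 m, f k = 0) → ((j:ℕ∞) ≤ (m:ℕ∞))}
          = Set.univ := by
        ext f
        simp only [Set.mem_setOf_eq, Set.mem_univ, iff_true]
        exact fun _ => hjm
      rw [this]
      exact MeasurableSet.univ
    · have : {f : ℕ → ℤ | (1 + ∑ k ∈ Finset.Icc 1 m, f k = 0) → ((j:ℕ∞) ≤ (m:ℕ∞))}
          = (fun f : ℕ → ℤ => 1 + ∑ k ∈ Finset.Icc 1 m, f k) ⁻¹' ({0}ᶜ) := by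
        ext f
        simp only [Set.mem_setOf_eq, Set.mem_preimage, Set.mem_compl_iff,
          Set.mem_singleton_iff]
        constructor
        · intro h hf
          exact hjm (h hf)
        · intro h hf
          exact absurd hf h
      rw [this]
      exact (measurable_const.add
        (Finset.measurable_sum _ (fun k _ => measurable_pi_apply k)))
        (measurableSet_singleton (0:ℤ)).compl
  have hGeq : ∀ j : ℕ, {ω | (j:ℕ∞) ≤ γ ω} = W ⁻¹' (Tj j) := by
    intro j
    ext ω
    simp only [Set.mem_setOf_eq, Set.mem_preimage, hTj, hW]
    rw [hγ ω, le_sInf_iff]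
    constructor
    · intro h m hm
      refine h (m:ℕ∞) ⟨m, rfl, ?_⟩
      rw [hV m ω]
      exact hm
    · rintro h t ⟨m, rfl, hVm⟩
      apply h m
      rw [hV m ω] at hVm
      exact hVm
  have hsplit : {ω | ((Y ω : ℕ∞)) ≤ γ ω} = ⋃ j : ℕ, (W ⁻¹' (Tj j) ∩ Y ⁻¹' {j}) := by
    ext ω
    simp only [Set.mem_setOf_eq, Set.mem_iUnion, Set.mem_inter_iff, Set.mem_preimage,
      Set.mem_singleton_iff]
    constructor
    · intro h
      refine ⟨Y ω, ?_, rfl⟩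
      have := hGeq (Y ω)
      rw [Set.ext_iff] at this
      exact (this ω).mp h
    · rintro ⟨j, hj1, hj2⟩
      have := hGeq j
      rw [Set.ext_iff] at this
      have h2 := (this ω).mpr hj1
      rw [hj2]
      exact h2
  -- the tail bound for each j ≥ 1
  have hGle : ∀ n : ℕ, μ (W ⁻¹' (Tj (n+1)))
      ≤ ENNReal.ofReal (2 / (Real.sqrt Real.pi * Real.sqrt ((n:ℝ)+1))) := by
    intro n
    have hsub : W ⁻¹' (Tj (n+1)) ⊆ {ω | ∀ m ≤ n, V m ω ≠ 0} := by
      intro ω hω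
      simp only [Set.mem_preimage, hTj, Set.mem_setOf_eq, hW] at hω
      intro m hm hVm
      rw [hV m ω] at hVm
      have := hω m hVm
      rw [Nat.cast_le] at this
      omega
    have h1 := E_bound μ X hXmeas hindep hup hdown V hV n
    have h2 : (Nat.choose n ((n+1)/2) : ℝ≥0∞) / 2^n
        ≤ ENNReal.ofReal (2 / (Real.sqrt Real.pi * Real.sqrt ((n:ℝ)+1))) := by
      rw [ENNReal.div_le_iff (by positivity) (by simp)]
      calc (Nat.choose n ((n+1)/2) : ℝ≥0∞)
          = ENNReal.ofReal ((Nat.choose n ((n+1)/2) : ℝ)) := by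
            rw [ENNReal.ofReal_natCast]
        _ ≤ ENNReal.ofReal (2^n * (2 / (Real.sqrt Real.pi * Real.sqrt ((n:ℝ)+1)))) :=
            ENNReal.ofReal_le_ofReal (choose_mid_le n)
        _ = ENNReal.ofReal (2 / (Real.sqrt Real.pi * Real.sqrt ((n:ℝ)+1))) * 2^n := by
            rw [mul_comm, ENNReal.ofReal_mul]
            · congr 1
              rw [ENNReal.ofReal_pow (by norm_num)]
              norm_num
            · positivity
    exact le_trans (measure_mono hsub) (le_trans h1 h2)
  -- per-term bounds
  have hYp : ∀ j : ℕ, μ (Y ⁻¹' {j}) = ENNReal.ofReal (pp ν j) := by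
    intro j
    have : Y ⁻¹' {j} = {ω | Y ω = j} := by
      ext ω
      simp [Set.mem_preimage]
    rw [this, hYlaw j]
    rfl
  have hterm : ∀ j : ℕ, μ (W ⁻¹' (Tj j) ∩ Y ⁻¹' {j}) ≤ ENNReal.ofReal (FF ν j) := by
    intro j
    have hfactor : μ (W ⁻¹' (Tj j) ∩ Y ⁻¹' {j}) = μ (W ⁻¹' (Tj j)) * μ (Y ⁻¹' {j}) :=
      hYindep.measure_inter_preimage_eq_mul (Tj j) {j} (hTmeas j)
        (measurableSet_singleton j)
    rw [hfactor, hYp j]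
    match j with
    | 0 =>
      calc μ (W ⁻¹' (Tj 0)) * ENNReal.ofReal (pp ν 0)
          ≤ 1 * ENNReal.ofReal (pp ν 0) := by
            gcongr
            exact prob_le_one
        _ = ENNReal.ofReal (pp ν 0 * 1) := by rw [one_mul, mul_one]
        _ = ENNReal.ofReal (FF ν 0) := rfl
    | (n+1) =>
      calc μ (W ⁻¹' (Tj (n+1))) * ENNReal.ofReal (pp ν (n+1))
          ≤ ENNReal.ofReal (2 / (Real.sqrt Real.pi * Real.sqrt ((n:ℝ)+1)))
              * ENNReal.ofReal (pp ν (n+1)) := by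
            gcongr
            exact hGle n
        _ = ENNReal.ofReal (pp ν (n+1) * (2 / (Real.sqrt Real.pi * Real.sqrt ((n:ℝ)+1)))) := by
            rw [← ENNReal.ofReal_mul (by positivity), mul_comm]
        _ = ENNReal.ofReal (FF ν (n+1)) := rfl
  -- summability of FF
  have hFF_nonneg : ∀ j, 0 ≤ FF ν j := by
    intro j
    match j with
    | 0 =>
      have := pp_nonneg hν0 0
      simp only [FF]
      linarith
    | (n+1) =>
      have h1 := pp_nonneg hν0 (n+1)
      have h2 : (0:ℝ) ≤ 2 / (Real.sqrt Real.pi * Real.sqrt ((n:ℝ)+1)) := by positivity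
      exact mul_nonneg h1 h2
  have hFF_summable : Summable (FF ν) := by
    apply Summable.of_nonneg_of_le hFF_nonneg (fun j => ?_) ((pp_summable hν0).mul_left 2)
    match j with
    | 0 =>
      simp only [FF]
      have := pp_nonneg hν0 0
      linarith
    | (n+1) =>
      simp only [FF]
      have h1 := pp_nonneg hν0 (n+1)
      have hpi1 : (1:ℝ) ≤ Real.sqrt Real.pi := sqrt_one_le (by linarith [Real.pi_gt_three])
      have hn1 : (1:ℝ) ≤ Real.sqrt ((n:ℝ)+1) := sqrt_one_le (by push_cast; linarith [Nat.cast_nonneg (α := ℝ) n])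
      have h2 : 2 / (Real.sqrt Real.pi * Real.sqrt ((n:ℝ)+1)) ≤ 2 := by
        rw [div_le_iff₀ (by positivity)]
        nlinarith
      calc pp ν (n+1) * (2 / (Real.sqrt Real.pi * Real.sqrt ((n:ℝ)+1)))
          ≤ pp ν (n+1) * 2 := mul_le_mul_of_nonneg_left h2 h1
        _ = 2 * pp ν (n+1) := by ring
  -- final chain
  calc μ {ω | ((Y ω : ℕ∞)) ≤ γ ω}
      = μ (⋃ j : ℕ, (W ⁻¹' (Tj j) ∩ Y ⁻¹' {j})) := by rw [hsplit]
    _ ≤ ∑' j : ℕ, μ (W ⁻¹' (Tj j) ∩ Y ⁻¹' {j}) := measure_iUnion_le _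
    _ ≤ ∑' j : ℕ, ENNReal.ofReal (FF ν j) := ENNReal.tsum_le_tsum hterm
    _ = ENNReal.ofReal (∑' j : ℕ, FF ν j) :=
        (ENNReal.ofReal_tsum_of_nonneg hFF_nonneg hFF_summable).symm
    _ ≤ ENNReal.ofReal
          (2.5 / ν ^ ((3 : ℝ) / 2)
            + (2 / Real.sqrt Real.pi) * (1 / Real.sqrt ν + 3 / ν ^ ((3 : ℝ) / 2))) := by
        apply ENNReal.ofReal_le_ofReal
        have hsplitsum : ∑' j : ℕ, FF ν j = FF ν 0 + ∑' j : ℕ, FF ν (j+1) :=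
          Summable.tsum_eq_zero_add hFF_summable
        rw [hsplitsum]
        have := main_real (ν := ν) hν
        exact this
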